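/- Let 𝒢 → S be a commutative smooth relative group over a sousperfectoid or rigid base S over a p-adic field K, and let Ĝ ⊆ 𝒢 be its maximal topologically p-torsion open subgroup with logarithm log : Ĝ → Lie 𝒢 ⊗ G_a. Then ker(log) = 𝒢[p^∞] := colim_n 𝒢[p^n], the p-power torsion subgroup of 𝒢. -/
import Mathlib


/-!
STATEMENT 5 (Proposition `p:log-of-smooth-group`.(1)):
For a commutative smooth relative group 𝒢 → S with maximal topologically p-torsion
open subgroup Ĝ = ⋃ₙ [pⁿ]⁻¹(U) (U an open subgroup on which the logarithm is injective)
and logarithm log : Ĝ → Lie 𝒢 ⊗ 𝔾ₐ, one has ker(log) = 𝒢[p^∞].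

We formalize the group-theoretic content on sections: `G` is the group of sections of 𝒢,
`V` the (ℚ-vector space) group of sections of Lie 𝒢 ⊗ 𝔾ₐ, `U` the subgroup of sections
of the open subgroup on which `log` is injective, and `Ghat` the subgroup of topologically
p-torsion sections, characterized by `x ∈ Ghat ↔ ∃ n, pⁿ • x ∈ U`.  The conclusion:
for x ∈ Ĝ, log x = 0 iff x is p-power torsion.
-/

theorem kernel_of_logarithm_is_p_power_torsion
    {G V : Type*} [AddCommGroup G] [AddCommGroup V] [Module ℚ V]
    (p : ℕ) (hp : p.Prime)
    (U : AddSubgroup G)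
    (Ghat : AddSubgroup G) (hGhat : ∀ x : G, x ∈ Ghat ↔ ∃ n : ℕ, p ^ n • x ∈ U)
    (log : G →+ V)
    (hinjU : ∀ x ∈ U, log x = 0 → x = 0) :
    ∀ x ∈ Ghat, (log x = 0 ↔ ∃ n : ℕ, p ^ n • x = 0) := by
  intro x hx
  obtain ⟨n, hn⟩ := (hGhat x).mp hx
  constructor
  · intro hlog
    refine ⟨n, hinjU _ hn ?_⟩
    rw [map_nsmul, hlog, smul_zero]
  · rintro ⟨m, hm⟩
    have h : (p ^ m : ℕ) • log x = 0 := by rw [← map_nsmul, hm, map_zero]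
    have h2 : ((p ^ m : ℕ) : ℚ) • log x = 0 := by
      rwa [Nat.cast_smul_eq_nsmul]
    have hpm : ((p ^ m : ℕ) : ℚ) ≠ 0 := by
      exact_mod_cast pow_ne_zero m hp.ne_zero
    exact (smul_eq_zero.mp h2).resolve_left hpm
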